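/- The rational functions v(t) = (4t³ − 3t − 1)/(3t) and u(t) = 256·t³(t−1)³(t²+t+1)³ / ((2t+1)³(4t²−2t+1)³) satisfy the identity 256·(u+1)³/u = 27·(v+1)³(v+3)³(v²+3)³ / (v³(v²+3v+3)³) as rational functions in t over ℚ. -/

import Mathlib

instance : CharZero (RatFunc ℚ) :=
  charZero_of_injective_algebraMap (algebraMap ℚ (RatFunc ℚ)).injective

lemma aux_ne0 (p : Polynomial ℚ) (h : Polynomial.eval 0 p ≠ 0) :
    algebraMap (Polynomial ℚ) (RatFunc ℚ) p ≠ 0 :=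
  RatFunc.algebraMap_ne_zero (fun hp => h (by rw [hp]; simp))

theorem stmt_12 :
    let t : RatFunc ℚ := RatFunc.X
    let v : RatFunc ℚ := (4 * t ^ 3 - 3 * t - 1) / (3 * t)
    let u : RatFunc ℚ := 256 * t ^ 3 * (t - 1) ^ 3 * (t ^ 2 + t + 1) ^ 3 /
      ((2 * t + 1) ^ 3 * (4 * t ^ 2 - 2 * t + 1) ^ 3)
    256 * (u + 1) ^ 3 / u =
      27 * (v + 1) ^ 3 * (v + 3) ^ 3 * (v ^ 2 + 3) ^ 3 /
        (v ^ 3 * (v ^ 2 + 3 * v + 3) ^ 3) := by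
  intro t v u
  have ht : t ≠ 0 := RatFunc.X_ne_zero
  have h1 : t - 1 ≠ 0 := by
    have := aux_ne0 (Polynomial.X - 1) (by norm_num)
    rwa [map_sub, map_one, RatFunc.algebraMap_X] at this
  have h2 : t ^ 2 + t + 1 ≠ 0 := by
    have := aux_ne0 (Polynomial.X ^ 2 + Polynomial.X + 1) (by norm_num)
    rwa [map_add, map_add, map_pow, map_one, RatFunc.algebraMap_X] at this
  have h3 : 2 * t + 1 ≠ 0 := by
    have := aux_ne0 (2 * Polynomial.X + 1) (by norm_num)
    rwa [map_add, map_mul, map_one, map_ofNat, RatFunc.algebraMap_X] at this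
  have h4 : 4 * t ^ 2 - 2 * t + 1 ≠ 0 := by
    have := aux_ne0 (4 * Polynomial.X ^ 2 - 2 * Polynomial.X + 1) (by norm_num)
    rwa [map_add, map_sub, map_mul, map_mul, map_pow, map_one, map_ofNat, map_ofNat,
      RatFunc.algebraMap_X] at this
  have h5 : 4 * t ^ 3 - 3 * t - 1 ≠ 0 := by
    have := aux_ne0 (4 * Polynomial.X ^ 3 - 3 * Polynomial.X - 1) (by norm_num)
    rwa [map_sub, map_sub, map_mul, map_mul, map_pow, map_one, map_ofNat, map_ofNat,
      RatFunc.algebraMap_X] at this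
  have h6 : (16 : RatFunc ℚ) * t ^ 6 + 12 * t ^ 4 - 8 * t ^ 3 + 9 * t ^ 2 - 3 * t + 1 ≠ 0 := by
    have := aux_ne0 (16 * Polynomial.X ^ 6 + 12 * Polynomial.X ^ 4 - 8 * Polynomial.X ^ 3 +
        9 * Polynomial.X ^ 2 - 3 * Polynomial.X + 1) (by norm_num)
    rwa [map_add, map_sub, map_add, map_sub, map_add, map_mul, map_mul, map_mul, map_mul,
      map_mul, map_pow, map_pow, map_pow, map_pow, map_one, map_ofNat, map_ofNat, map_ofNat,
      map_ofNat, map_ofNat, RatFunc.algebraMap_X] at this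
  have h3t : (3 : RatFunc ℚ) * t ≠ 0 := mul_ne_zero (by norm_num) ht
  have hv : v ≠ 0 := div_ne_zero h5 h3t
  have hu : u ≠ 0 := by
    apply div_ne_zero
    · exact mul_ne_zero (mul_ne_zero (mul_ne_zero (by norm_num) (pow_ne_zero _ ht))
        (pow_ne_zero _ h1)) (pow_ne_zero _ h2)
    · exact mul_ne_zero (pow_ne_zero _ h3) (pow_ne_zero _ h4)
  have hvq : v ^ 2 + 3 * v + 3 =
      (16 * t ^ 6 + 12 * t ^ 4 - 8 * t ^ 3 + 9 * t ^ 2 - 3 * t + 1) / (9 * t ^ 2) := by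
    rw [show v = (4 * t ^ 3 - 3 * t - 1) / (3 * t) from rfl]
    field_simp
    ring
  have h7 : v ^ 2 + 3 * v + 3 ≠ 0 := by
    rw [hvq]
    exact div_ne_zero h6 (mul_ne_zero (by norm_num) (pow_ne_zero _ ht))
  rw [div_eq_div_iff hu (mul_ne_zero (pow_ne_zero _ hv) (pow_ne_zero _ h7))]
  rw [hvq]
  rw [show u = 256 * t ^ 3 * (t - 1) ^ 3 * (t ^ 2 + t + 1) ^ 3 /
      ((2 * t + 1) ^ 3 * (4 * t ^ 2 - 2 * t + 1) ^ 3) from rfl,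
    show v = (4 * t ^ 3 - 3 * t - 1) / (3 * t) from rfl]
  field_simp [ht, h1, h2, h3, h4, h5, h6]
  have e : (t * 2 + 1) ^ 3 * (t * (t * 4 - 2) + 1) ^ 3 ≠ 0 := by
    convert mul_ne_zero (pow_ne_zero 3 h3) (pow_ne_zero 3 h4) using 3 <;> ring
  rw [div_add_one e, div_pow, div_mul_eq_mul_div, div_mul_eq_mul_div, div_mul_eq_mul_div,
    div_eq_div_iff (pow_ne_zero _ e) e]
  ring
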